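/- The infinite product Π_{ℓ=1}^∞ (k_ℓ / n_ℓ), where n_ℓ = 2^{r_ℓ} - 1, k_ℓ = 2^{r_ℓ} - 2r_ℓ - 1, and r_ℓ = ⌊2 log₂(4ℓ)⌋, is bounded below by a positive constant (in particular, at least 1/300). -/

import Mathlib

/-- The concatenation-level parameter `r_ℓ = ⌊2 log₂(4ℓ)⌋`. -/
noncomputable def rHam (ℓ : ℕ) : ℕ := ⌊2 * Real.logb 2 (4 * (ℓ : ℝ))⌋₊

/-- Block length `n_ℓ = 2^{r_ℓ} - 1` of the `ℓ`-th quantum Hamming code. -/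
noncomputable def nHam (ℓ : ℕ) : ℕ := 2 ^ rHam ℓ - 1

/-- Dimension `k_ℓ = 2^{r_ℓ} - 2 r_ℓ - 1` of the `ℓ`-th quantum Hamming code. -/
noncomputable def kHam (ℓ : ℕ) : ℕ := 2 ^ rHam ℓ - 2 * rHam ℓ - 1

lemma rHam_eq (ℓ : ℕ) : rHam ℓ = Nat.log 2 (16 * ℓ ^ 2) := by
  have h2 : 2 * Real.logb 2 (4 * (ℓ : ℝ)) = Real.logb 2 ((16 * ℓ ^ 2 : ℕ) : ℝ) := by
    have : ((16 * ℓ ^ 2 : ℕ) : ℝ) = (4 * (ℓ:ℝ)) ^ 2 := by push_cast; ring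
    rw [this, Real.logb_pow]; ring
  have h3 := Real.floor_logb_natCast (b := 2) (r := ((16 * ℓ ^ 2 : ℕ) : ℝ)) (Nat.cast_nonneg _)
  rw [Int.log_natCast] at h3
  rw [rHam, h2, ← Int.floor_toNat]
  rw [show ((2:ℝ)) = ((2:ℕ):ℝ) by norm_num, h3, Int.toNat_natCast]

lemma rHam_ge {ℓ : ℕ} (h : 1 ≤ ℓ) : 4 ≤ rHam ℓ := by
  rw [rHam_eq]
  calc 4 = Nat.log 2 16 := (Nat.log_eq_of_pow_le_of_lt_pow (by norm_num) (by norm_num)).symm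
  _ ≤ Nat.log 2 (16 * ℓ ^ 2) := Nat.log_mono_right (by nlinarith)

lemma two_pow_rHam_le {ℓ : ℕ} (h : 1 ≤ ℓ) : 2 ^ rHam ℓ ≤ 16 * ℓ ^ 2 := by
  rw [rHam_eq]
  exact Nat.pow_log_le_self 2 (by positivity)

lemma nHam_ge {ℓ : ℕ} (h : 1 ≤ ℓ) : 8 * ℓ ^ 2 ≤ nHam ℓ := by
  have h1 : 16 * ℓ ^ 2 < 2 ^ (rHam ℓ + 1) := by
    rw [rHam_eq]; exact Nat.lt_pow_succ_log_self (by norm_num) _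
  rw [pow_succ 2 (rHam ℓ)] at h1
  have h2 : 8 * ℓ ^ 2 < 2 ^ rHam ℓ := by nlinarith
  rw [nHam]
  exact Nat.le_sub_one_of_lt h2

lemma aux_pow {r : ℕ} (h : 4 ≤ r) : 2 * r + 1 < 2 ^ r := by
  induction r with
  | zero => omega
  | succ n ih =>
    rcases Nat.lt_or_ge n 4 with h4 | h4
    · interval_cases n <;> simp_all <;> omega
    · have := ih h4
      have : 2 ^ n ≥ 16 := by calc 16 = 2^4 := by norm_num
                                  _ ≤ 2^n := Nat.pow_le_pow_right (by norm_num) h4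
      rw [pow_succ]; omega

lemma nHam_decomp {ℓ : ℕ} (h : 1 ≤ ℓ) : nHam ℓ = kHam ℓ + 2 * rHam ℓ := by
  have := aux_pow (rHam_ge h)
  rw [nHam, kHam]; omega

lemma nHam_pos {ℓ : ℕ} (h : 1 ≤ ℓ) : 0 < nHam ℓ := lt_of_lt_of_le (by positivity) (nHam_ge h)

lemma rate_eq {ℓ : ℕ} (h : 1 ≤ ℓ) :
    (kHam ℓ : ℝ) / nHam ℓ = 1 - (2 * rHam ℓ : ℝ) / nHam ℓ := by
  have hn : (0:ℝ) < nHam ℓ := by exact_mod_cast nHam_pos h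
  have hd := nHam_decomp h
  field_simp
  have : (nHam ℓ : ℝ) = (kHam ℓ : ℝ) + 2 * rHam ℓ := by exact_mod_cast congrArg (Nat.cast (R := ℝ)) hd
  linarith

lemma rate_nonneg (ℓ : ℕ) : 0 ≤ (kHam ℓ : ℝ) / nHam ℓ := by positivity

lemma rate_le_one (ℓ : ℕ) : (kHam ℓ : ℝ) / nHam ℓ ≤ 1 := by
  apply div_le_one_of_le₀
  · exact_mod_cast Nat.cast_le.2 (show kHam ℓ ≤ nHam ℓ by unfold kHam nHam; omega)
  · positivity


lemma rHam_real_le {ℓ : ℕ} (h : 1 ≤ ℓ) : (2 * rHam ℓ : ℝ) ≤ 12 * Real.sqrt ℓ := by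
  have hle := two_pow_rHam_le h
  set x : ℝ := (ℓ : ℝ) with hx
  have hx1 : (1:ℝ) ≤ x := by rw [hx]; exact_mod_cast h
  have hx0 : (0:ℝ) < x := by linarith
  have hs0 : (0:ℝ) < Real.sqrt x := Real.sqrt_pos.2 hx0
  have hs1 : (1:ℝ) ≤ Real.sqrt x := by
    rw [show (1:ℝ) = Real.sqrt 1 by simp]; exact Real.sqrt_le_sqrt hx1
  have hlog : Real.log x ≤ 2 * (Real.sqrt x - 1) := by
    have := Real.log_le_sub_one_of_pos hs0
    rw [Real.log_sqrt hx0.le] at this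
    linarith
  have hcast : (2:ℝ) ^ rHam ℓ ≤ 16 * x ^ 2 := by
    have h2 : ((2 ^ rHam ℓ : ℕ) : ℝ) ≤ ((16 * ℓ ^ 2 : ℕ) : ℝ) := by exact_mod_cast hle
    push_cast at h2; convert h2 using 2
  have hr : (rHam ℓ : ℝ) ≤ Real.logb 2 (16 * x ^ 2) := by
    have h1 : Real.logb 2 ((2:ℝ) ^ rHam ℓ) ≤ Real.logb 2 (16 * x ^ 2) :=
      Real.logb_le_logb_of_le (by norm_num) (by positivity) hcast
    rwa [Real.logb_pow, Real.logb_self_eq_one (by norm_num), mul_one] at h1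
  have hsplit : Real.logb 2 (16 * x ^ 2) = 4 + 2 * (Real.log x / Real.log 2) := by
    rw [Real.logb, Real.log_mul (by norm_num) (by positivity), Real.log_pow]
    rw [show (16:ℝ) = 2^(4:ℕ) by norm_num, Real.log_pow]
    field_simp
    push_cast; ring
  have hlog2 : (2:ℝ)/3 ≤ Real.log 2 := by
    have := Real.log_two_gt_d9
    linarith
  have hlog2pos : (0:ℝ) < Real.log 2 := by linarith
  have hdiv : Real.log x / Real.log 2 ≤ 3 * (Real.sqrt x - 1) := by
    rw [div_le_iff₀ hlog2pos]
    nlinarith [Real.log_nonneg hx1]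
  have : (rHam ℓ : ℝ) ≤ 6 * Real.sqrt x - 2 := by
    rw [hsplit] at hr; linarith
  linarith

lemma nHam_real_ge {ℓ : ℕ} (h : 1 ≤ ℓ) : (8:ℝ) * (ℓ:ℝ) ^ 2 ≤ nHam ℓ := by
  have := nHam_ge h
  have h2 : ((8 * ℓ ^ 2 : ℕ) : ℝ) ≤ ((nHam ℓ : ℕ) : ℝ) := by exact_mod_cast this
  push_cast at h2; convert h2 using 2

lemma a_le {L : ℕ} (h : 16 ≤ L) :
    (2 * rHam (L+1) : ℝ) / nHam (L+1) ≤
      3 * (1 / Real.sqrt L - 1 / Real.sqrt ((L:ℝ)+1)) := by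
  have h1 : (2 * rHam (L+1) : ℝ) ≤ 12 * Real.sqrt ((L:ℝ)+1) := by
    have := rHam_real_le (ℓ := L+1) (by omega)
    push_cast at this
    convert this using 3
  have h2 : (8:ℝ) * ((L:ℝ)+1) ^ 2 ≤ nHam (L+1) := by
    have := nHam_real_ge (ℓ := L+1) (by omega)
    push_cast at this
    convert this using 2
  set a : ℝ := Real.sqrt L with ha
  set b : ℝ := Real.sqrt ((L:ℝ)+1) with hb
  have hL0 : (0:ℝ) < L := by exact_mod_cast Nat.lt_of_lt_of_le (by norm_num) h
  have ha0 : (0:ℝ) < a := Real.sqrt_pos.2 hL0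
  have hb0 : (0:ℝ) < b := Real.sqrt_pos.2 (by linarith)
  have hab : a ≤ b := Real.sqrt_le_sqrt (by linarith)
  have ha2 : a ^ 2 = L := Real.sq_sqrt hL0.le
  have hb2 : b ^ 2 = (L:ℝ) + 1 := Real.sq_sqrt (by linarith)
  have hsq : ((L:ℝ)+1) ^ 2 = b ^ 4 := by rw [← hb2]; ring
  have hn0 : (0:ℝ) < nHam (L+1) := by nlinarith
  have step1 : (2 * rHam (L+1) : ℝ) / nHam (L+1) ≤ 12 * b / (8 * b ^ 4) := by
    apply div_le_div₀ (by positivity) h1 (by positivity)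
    rw [← hsq]; exact h2
  have step2 : 12 * b / (8 * b ^ 4) = 3 / (2 * b ^ 3) := by
    field_simp; ring
  have key : 1 / a - 1 / b = 1 / (a * b * (a + b)) := by
    have hdiff : (b - a) * (b + a) = 1 := by nlinarith
    field_simp
    linear_combination hdiff
  have step3 : 3 / (2 * b ^ 3) ≤ 3 / (a * b * (a + b)) := by
    apply div_le_div_of_nonneg_left (by norm_num) (by positivity)
    nlinarith
  calc (2 * rHam (L+1) : ℝ) / nHam (L+1) ≤ 12 * b / (8 * b ^ 4) := step1
    _ = 3 / (2 * b ^ 3) := step2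
    _ ≤ 3 / (a * b * (a + b)) := step3
    _ = 3 * (1 / a - 1 / b) := by rw [key]; ring

lemma sum_bound : ∀ L, 16 ≤ L →
    ∑ ℓ ∈ Finset.Ioc 16 L, (2 * rHam ℓ : ℝ) / nHam ℓ ≤ 3 * (1/4 - 1 / Real.sqrt L) := by
  intro L
  induction L with
  | zero => omega
  | succ n ih =>
    intro h
    rcases Nat.lt_or_ge n 16 with h16 | h16
    · have hn : n = 15 := by omega
      subst hn
      have h4 : Real.sqrt 16 = 4 := by
        rw [show (16:ℝ) = 4^2 by norm_num, Real.sqrt_sq (by norm_num)]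
      norm_num [Finset.Ioc_self, h4]
    · have hIH := ih h16
      rw [Finset.sum_Ioc_succ_top (by omega)]
      have hstep := a_le h16
      have hcast : Real.sqrt ((n:ℝ)+1) = Real.sqrt ((n+1 : ℕ) : ℝ) := by push_cast; ring_nf
      rw [hcast] at hstep
      have hpos : 0 < Real.sqrt ((n:ℕ):ℝ) := Real.sqrt_pos.2 (by exact_mod_cast Nat.lt_of_lt_of_le (by norm_num) h16)
      linarith

lemma weier (s : Finset ℕ) (f : ℕ → ℝ) (h0 : ∀ i ∈ s, 0 ≤ f i) (h1 : ∀ i ∈ s, f i ≤ 1) :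
    1 - ∑ i ∈ s, f i ≤ ∏ i ∈ s, (1 - f i) := by
  induction s using Finset.cons_induction with
  | empty => simp
  | cons j s hj ih =>
    rw [Finset.prod_cons, Finset.sum_cons]
    have h0j := h0 j (Finset.mem_cons_self j s)
    have h1j := h1 j (Finset.mem_cons_self j s)
    have h0' : ∀ i ∈ s, 0 ≤ f i := fun i hi => h0 i (Finset.mem_cons.2 (Or.inr hi))
    have h1' : ∀ i ∈ s, f i ≤ 1 := fun i hi => h1 i (Finset.mem_cons.2 (Or.inr hi))
    have ihs := ih h0' h1'
    have hsum0 : 0 ≤ ∑ i ∈ s, f i := Finset.sum_nonneg h0'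
    have hprod0 : 0 ≤ ∏ i ∈ s, (1 - f i) :=
      Finset.prod_nonneg fun i hi => by linarith [h1' i hi]
    rcases le_or_gt (1 - ∑ i ∈ s, f i) 0 with hc | hc
    · nlinarith
    · nlinarith [mul_le_mul_of_nonneg_left ihs (by linarith : (0:ℝ) ≤ 1 - f j)]

lemma prod_subset_ge {s t : Finset ℕ} (f : ℕ → ℝ) (hst : s ⊆ t)
    (h0 : ∀ i ∈ t, 0 ≤ f i) (h1 : ∀ i ∈ t, f i ≤ 1) :
    ∏ i ∈ t, f i ≤ ∏ i ∈ s, f i := by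
  rw [← Finset.prod_sdiff hst]
  have hA : ∏ i ∈ t \ s, f i ≤ 1 :=
    Finset.prod_le_one (fun i hi => h0 i (Finset.sdiff_subset hi))
      (fun i hi => h1 i (Finset.sdiff_subset hi))
  have hA0 : 0 ≤ ∏ i ∈ t \ s, f i :=
    Finset.prod_nonneg fun i hi => h0 i (Finset.sdiff_subset hi)
  have hB0 : 0 ≤ ∏ i ∈ s, f i := Finset.prod_nonneg fun i hi => h0 i (hst hi)
  nlinarith

lemma rHam_1 : rHam 1 = 4 := by
  rw [rHam_eq]; exact Nat.log_eq_of_pow_le_of_lt_pow (by norm_num) (by norm_num)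
lemma rHam_2 : rHam 2 = 6 := by
  rw [rHam_eq]; exact Nat.log_eq_of_pow_le_of_lt_pow (by norm_num) (by norm_num)
lemma rHam_3 : rHam 3 = 7 := by
  rw [rHam_eq]; exact Nat.log_eq_of_pow_le_of_lt_pow (by norm_num) (by norm_num)
lemma rHam_4 : rHam 4 = 8 := by
  rw [rHam_eq]; exact Nat.log_eq_of_pow_le_of_lt_pow (by norm_num) (by norm_num)
lemma rHam_5 : rHam 5 = 8 := by
  rw [rHam_eq]; exact Nat.log_eq_of_pow_le_of_lt_pow (by norm_num) (by norm_num)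
lemma rHam_6 : rHam 6 = 9 := by
  rw [rHam_eq]; exact Nat.log_eq_of_pow_le_of_lt_pow (by norm_num) (by norm_num)
lemma rHam_7 : rHam 7 = 9 := by
  rw [rHam_eq]; exact Nat.log_eq_of_pow_le_of_lt_pow (by norm_num) (by norm_num)
lemma rHam_8 : rHam 8 = 10 := by
  rw [rHam_eq]; exact Nat.log_eq_of_pow_le_of_lt_pow (by norm_num) (by norm_num)
lemma rHam_9 : rHam 9 = 10 := by
  rw [rHam_eq]; exact Nat.log_eq_of_pow_le_of_lt_pow (by norm_num) (by norm_num)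
lemma rHam_10 : rHam 10 = 10 := by
  rw [rHam_eq]; exact Nat.log_eq_of_pow_le_of_lt_pow (by norm_num) (by norm_num)
lemma rHam_11 : rHam 11 = 10 := by
  rw [rHam_eq]; exact Nat.log_eq_of_pow_le_of_lt_pow (by norm_num) (by norm_num)
lemma rHam_12 : rHam 12 = 11 := by
  rw [rHam_eq]; exact Nat.log_eq_of_pow_le_of_lt_pow (by norm_num) (by norm_num)
lemma rHam_13 : rHam 13 = 11 := by
  rw [rHam_eq]; exact Nat.log_eq_of_pow_le_of_lt_pow (by norm_num) (by norm_num)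
lemma rHam_14 : rHam 14 = 11 := by
  rw [rHam_eq]; exact Nat.log_eq_of_pow_le_of_lt_pow (by norm_num) (by norm_num)
lemma rHam_15 : rHam 15 = 11 := by
  rw [rHam_eq]; exact Nat.log_eq_of_pow_le_of_lt_pow (by norm_num) (by norm_num)
lemma rHam_16 : rHam 16 = 12 := by
  rw [rHam_eq]; exact Nat.log_eq_of_pow_le_of_lt_pow (by norm_num) (by norm_num)

lemma kn_1 : (kHam 1 : ℝ) = 7 ∧ (nHam 1 : ℝ) = 15 := by
  constructor <;> [rw [kHam, rHam_1]; rw [nHam, rHam_1]] <;> norm_num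
lemma kn_2 : (kHam 2 : ℝ) = 51 ∧ (nHam 2 : ℝ) = 63 := by
  constructor <;> [rw [kHam, rHam_2]; rw [nHam, rHam_2]] <;> norm_num
lemma kn_3 : (kHam 3 : ℝ) = 113 ∧ (nHam 3 : ℝ) = 127 := by
  constructor <;> [rw [kHam, rHam_3]; rw [nHam, rHam_3]] <;> norm_num
lemma kn_4 : (kHam 4 : ℝ) = 239 ∧ (nHam 4 : ℝ) = 255 := by
  constructor <;> [rw [kHam, rHam_4]; rw [nHam, rHam_4]] <;> norm_num
lemma kn_5 : (kHam 5 : ℝ) = 239 ∧ (nHam 5 : ℝ) = 255 := by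
  constructor <;> [rw [kHam, rHam_5]; rw [nHam, rHam_5]] <;> norm_num
lemma kn_6 : (kHam 6 : ℝ) = 493 ∧ (nHam 6 : ℝ) = 511 := by
  constructor <;> [rw [kHam, rHam_6]; rw [nHam, rHam_6]] <;> norm_num
lemma kn_7 : (kHam 7 : ℝ) = 493 ∧ (nHam 7 : ℝ) = 511 := by
  constructor <;> [rw [kHam, rHam_7]; rw [nHam, rHam_7]] <;> norm_num
lemma kn_8 : (kHam 8 : ℝ) = 1003 ∧ (nHam 8 : ℝ) = 1023 := by
  constructor <;> [rw [kHam, rHam_8]; rw [nHam, rHam_8]] <;> norm_num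
lemma kn_9 : (kHam 9 : ℝ) = 1003 ∧ (nHam 9 : ℝ) = 1023 := by
  constructor <;> [rw [kHam, rHam_9]; rw [nHam, rHam_9]] <;> norm_num
lemma kn_10 : (kHam 10 : ℝ) = 1003 ∧ (nHam 10 : ℝ) = 1023 := by
  constructor <;> [rw [kHam, rHam_10]; rw [nHam, rHam_10]] <;> norm_num
lemma kn_11 : (kHam 11 : ℝ) = 1003 ∧ (nHam 11 : ℝ) = 1023 := by
  constructor <;> [rw [kHam, rHam_11]; rw [nHam, rHam_11]] <;> norm_num
lemma kn_12 : (kHam 12 : ℝ) = 2025 ∧ (nHam 12 : ℝ) = 2047 := by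
  constructor <;> [rw [kHam, rHam_12]; rw [nHam, rHam_12]] <;> norm_num
lemma kn_13 : (kHam 13 : ℝ) = 2025 ∧ (nHam 13 : ℝ) = 2047 := by
  constructor <;> [rw [kHam, rHam_13]; rw [nHam, rHam_13]] <;> norm_num
lemma kn_14 : (kHam 14 : ℝ) = 2025 ∧ (nHam 14 : ℝ) = 2047 := by
  constructor <;> [rw [kHam, rHam_14]; rw [nHam, rHam_14]] <;> norm_num
lemma kn_15 : (kHam 15 : ℝ) = 2025 ∧ (nHam 15 : ℝ) = 2047 := by
  constructor <;> [rw [kHam, rHam_15]; rw [nHam, rHam_15]] <;> norm_num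
lemma kn_16 : (kHam 16 : ℝ) = 4071 ∧ (nHam 16 : ℝ) = 4095 := by
  constructor <;> [rw [kHam, rHam_16]; rw [nHam, rHam_16]] <;> norm_num

lemma P0_ge : (1/75 : ℝ) ≤ ∏ ℓ ∈ Finset.Icc 1 16, (kHam ℓ : ℝ) / nHam ℓ := by
  rw [show (16:ℕ) = 15+1 from rfl, Finset.prod_Icc_succ_top (by norm_num)]
  rw [show (15:ℕ) = 14+1 from rfl, Finset.prod_Icc_succ_top (by norm_num)]
  rw [show (14:ℕ) = 13+1 from rfl, Finset.prod_Icc_succ_top (by norm_num)]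
  rw [show (13:ℕ) = 12+1 from rfl, Finset.prod_Icc_succ_top (by norm_num)]
  rw [show (12:ℕ) = 11+1 from rfl, Finset.prod_Icc_succ_top (by norm_num)]
  rw [show (11:ℕ) = 10+1 from rfl, Finset.prod_Icc_succ_top (by norm_num)]
  rw [show (10:ℕ) = 9+1 from rfl, Finset.prod_Icc_succ_top (by norm_num)]
  rw [show (9:ℕ) = 8+1 from rfl, Finset.prod_Icc_succ_top (by norm_num)]
  rw [show (8:ℕ) = 7+1 from rfl, Finset.prod_Icc_succ_top (by norm_num)]
  rw [show (7:ℕ) = 6+1 from rfl, Finset.prod_Icc_succ_top (by norm_num)]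
  rw [show (6:ℕ) = 5+1 from rfl, Finset.prod_Icc_succ_top (by norm_num)]
  rw [show (5:ℕ) = 4+1 from rfl, Finset.prod_Icc_succ_top (by norm_num)]
  rw [show (4:ℕ) = 3+1 from rfl, Finset.prod_Icc_succ_top (by norm_num)]
  rw [show (3:ℕ) = 2+1 from rfl, Finset.prod_Icc_succ_top (by norm_num)]
  rw [show (2:ℕ) = 1+1 from rfl, Finset.prod_Icc_succ_top (by norm_num)]
  rw [Finset.Icc_self, Finset.prod_singleton]
  rw [kn_1.1, kn_1.2, kn_2.1, kn_2.2, kn_3.1, kn_3.2, kn_4.1, kn_4.2, kn_5.1, kn_5.2, kn_6.1, kn_6.2, kn_7.1, kn_7.2, kn_8.1, kn_8.2, kn_9.1, kn_9.2, kn_10.1, kn_10.2, kn_11.1, kn_11.2, kn_12.1, kn_12.2, kn_13.1, kn_13.2, kn_14.1, kn_14.2, kn_15.1, kn_15.2, kn_16.1, kn_16.2]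
  norm_num

lemma two_r_le_n {ℓ : ℕ} (h : 1 ≤ ℓ) : (2 * rHam ℓ : ℝ) / nHam ℓ ≤ 1 := by
  apply div_le_one_of_le₀
  · have := nHam_decomp h
    have h2 : 2 * rHam ℓ ≤ nHam ℓ := by omega
    exact_mod_cast h2
  · positivity

/-- The infinite product `∏_{ℓ=1}^∞ (k_ℓ / n_ℓ)` of the rates of the quantum Hamming
codes with `r_ℓ = ⌊2 log₂(4ℓ)⌋` is bounded below by the positive constant `1/300`:
every partial product is at least `1/300`, and so is the infinite product. -/
theorem stmt11 :
    (∀ L : ℕ, (1 / 300 : ℝ) ≤ ∏ ℓ ∈ Finset.Icc 1 L, (kHam ℓ : ℝ) / (nHam ℓ)) ∧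
    (1 / 300 : ℝ) ≤ ∏' ℓ : ℕ, ((kHam (ℓ + 1) : ℝ) / (nHam (ℓ + 1))) := by
  have hIcc : ∀ M : ℕ, Finset.Icc 1 M = Finset.Ioc 0 M := by
    intro M; ext x; simp [Finset.mem_Icc, Finset.mem_Ioc]; omega
  have part1 : ∀ L : ℕ, (1 / 300 : ℝ) ≤ ∏ ℓ ∈ Finset.Icc 1 L, (kHam ℓ : ℝ) / (nHam ℓ) := by
    intro L
    rcases le_or_gt L 16 with hL | hL
    · have hsub : Finset.Icc 1 L ⊆ Finset.Icc 1 16 := Finset.Icc_subset_Icc_right hL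
      have hmono := prod_subset_ge (fun ℓ => (kHam ℓ : ℝ) / nHam ℓ) hsub
        (fun i _ => rate_nonneg i) (fun i _ => rate_le_one i)
      have hP := P0_ge
      linarith
    · have hsplit := Finset.prod_Ioc_consecutive (fun ℓ => (kHam ℓ : ℝ) / nHam ℓ)
        (show (0:ℕ) ≤ 16 by norm_num) (show (16:ℕ) ≤ L by omega)
      have htail : (1/4 : ℝ) ≤ ∏ ℓ ∈ Finset.Ioc 16 L, (kHam ℓ : ℝ) / nHam ℓ := by
        have hprod_eq : ∏ ℓ ∈ Finset.Ioc 16 L, (kHam ℓ : ℝ) / nHam ℓ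
            = ∏ ℓ ∈ Finset.Ioc 16 L, (1 - (2 * rHam ℓ : ℝ) / nHam ℓ) :=
          Finset.prod_congr rfl (fun ℓ hℓ =>
            rate_eq (by have := (Finset.mem_Ioc.1 hℓ).1; omega))
        have hw := weier (Finset.Ioc 16 L) (fun ℓ => (2 * rHam ℓ : ℝ) / nHam ℓ)
          (fun i _ => by positivity)
          (fun i hi => two_r_le_n (by have := (Finset.mem_Ioc.1 hi).1; omega))
        have hs := sum_bound L (by omega)
        have hsqrt : 0 < Real.sqrt L :=
          Real.sqrt_pos.2 (by exact_mod_cast Nat.lt_of_lt_of_le (by norm_num) (le_of_lt hL))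
        have hinv : 0 < 1 / Real.sqrt L := by positivity
        rw [hprod_eq]
        linarith
      have hP := P0_ge
      rw [hIcc 16] at hP
      have hP0nn : (0:ℝ) ≤ ∏ ℓ ∈ Finset.Ioc 0 16, (kHam ℓ : ℝ) / nHam ℓ := by linarith
      rw [hIcc L, ← hsplit]
      calc (1/300 : ℝ) = (1/75) * (1/4) := by norm_num
        _ ≤ (∏ ℓ ∈ Finset.Ioc 0 16, (kHam ℓ : ℝ) / nHam ℓ)
              * ∏ ℓ ∈ Finset.Ioc 16 L, (kHam ℓ : ℝ) / nHam ℓ :=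
          mul_le_mul hP htail (by norm_num) hP0nn
  refine ⟨part1, ?_⟩
  set f : ℕ → ℝ := fun ℓ => (kHam (ℓ + 1) : ℝ) / nHam (ℓ + 1) with hf
  have hrange : ∀ N, ∏ i ∈ Finset.range N, f i = ∏ ℓ ∈ Finset.Icc 1 N, (kHam ℓ : ℝ) / nHam ℓ := by
    intro N
    induction N with
    | zero => simp
    | succ n ih =>
      rw [Finset.prod_range_succ, ih, Finset.prod_Icc_succ_top (by omega)]
  have hfin : ∀ s : Finset ℕ, (1/300 : ℝ) ≤ ∏ i ∈ s, f i := by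
    intro s
    obtain ⟨N, hN⟩ := s.exists_nat_subset_range
    have h1 : ∏ i ∈ Finset.range N, f i ≤ ∏ i ∈ s, f i :=
      prod_subset_ge f hN (fun i _ => rate_nonneg _) (fun i _ => rate_le_one _)
    have h2 := part1 N
    rw [← hrange] at h2
    linarith
  by_cases hm : Multipliable f
  · exact ge_of_tendsto' hm.hasProd hfin
  · rw [tprod_eq_one_of_not_multipliable hm]; norm_num
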